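/- Let d ∈ ℕ_{>0} and let G be a nonempty finite simple d-regular graph (every vertex has degree exactly d). Then ffn(G) ≥ d + 1, and if d ∈ {1, 2} then ffn(G) = d + 1. -/

import Mathlib

open scoped Classical
noncomputable section

variable {V : Type*}

/-- The neighbourhood of a set of vertices: all vertices outside `S` adjacent to some
vertex of `S`. -/
def nbhd [Fintype V] (G : SimpleGraph V) (S : Finset V) : Finset V :=
  Finset.univ.filter fun v => v ∉ S ∧ ∃ u ∈ S, G.Adj u v

/-- The burning sets of a strategy `F` (where `F i` is the firefighter set at time `i`):
`B 0 = V` and `B (t+1) = (B t \ F (t+1)) ∪ N(B t \ F (t+1))`. -/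
def burn [Fintype V] (G : SimpleGraph V) (F : ℕ → Finset V) : ℕ → Finset V
  | 0 => Finset.univ
  | t + 1 => (burn G F t \ F (t + 1)) ∪ nbhd G (burn G F t \ F (t + 1))

/-- `F` is a `T`-winning `m`-strategy for `G`. -/
def WinningStrategy [Fintype V] (G : SimpleGraph V) (m T : ℕ) (F : ℕ → Finset V) : Prop :=
  (∀ i, (F i).card ≤ m) ∧ burn G F T = ∅

/-- The firefighter number of `G`: the least `m` admitting a winning `m`-strategy. -/
def ffn [Fintype V] (G : SimpleGraph V) : ℕ :=
  sInf {m | ∃ T F, WinningStrategy G m T F}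


namespace FFNAux

variable [Fintype V]

lemma mem_nbhd {G : SimpleGraph V} {S : Finset V} {v : V} :
    v ∈ nbhd G S ↔ v ∉ S ∧ ∃ u ∈ S, G.Adj u v := by
  simp [nbhd]

/-- One step of the burning process. -/
def stepB (G : SimpleGraph V) (B F : Finset V) : Finset V :=
  (B \ F) ∪ nbhd G (B \ F)

/-- The boundary of `B`: vertices of `B` with a neighbour outside `B`. -/
def bdry (G : SimpleGraph V) (B : Finset V) : Finset V :=
  B.filter fun x => ∃ w, w ∉ B ∧ G.Adj x w

lemma mem_bdry {G : SimpleGraph V} {B : Finset V} {x : V} :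
    x ∈ bdry G B ↔ x ∈ B ∧ ∃ w, w ∉ B ∧ G.Adj x w := by
  simp [bdry]

def burnFrom (G : SimpleGraph V) (F : ℕ → Finset V) (B : Finset V) : ℕ → Finset V
  | 0 => B
  | t + 1 => stepB G (burnFrom G F B t) (F (t + 1))

lemma burn_eq_burnFrom (G : SimpleGraph V) (F : ℕ → Finset V) :
    ∀ t, burn G F t = burnFrom G F Finset.univ t
  | 0 => rfl
  | t + 1 => by
      rw [burn, burnFrom, burn_eq_burnFrom G F t]; rfl

def Wins (G : SimpleGraph V) (m : ℕ) (B : Finset V) : Prop :=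
  ∃ T F, (∀ i, (F i : Finset V).card ≤ m) ∧ burnFrom G F B T = ∅

lemma wins_empty {G : SimpleGraph V} {m : ℕ} : Wins G m (∅ : Finset V) :=
  ⟨0, fun _ => ∅, fun _ => by simp, rfl⟩

lemma wins_step {G : SimpleGraph V} {m : ℕ} {B F₀ : Finset V}
    (h : F₀.card ≤ m) (hw : Wins G m (stepB G B F₀)) : Wins G m B := by
  obtain ⟨T, F, hF, hT⟩ := hw
  refine ⟨T + 1, fun n => if n ≤ 1 then F₀ else F (n - 1), fun i => ?_, ?_⟩
  · dsimp only; split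
    · exact h
    · exact hF _
  · have key : ∀ t, burnFrom G (fun n => if n ≤ 1 then F₀ else F (n - 1)) B (t + 1)
        = burnFrom G F (stepB G B F₀) t := by
      intro t; induction t with
      | zero => simp [burnFrom]
      | succ t ih =>
          show stepB G _ _ = stepB G _ _
          rw [ih]
          have h2 : ¬ (t + 1 + 1 ≤ 1) := by omega
          simp [h2]
    rw [key T, hT]


lemma step_lemma {G : SimpleGraph V} {d : ℕ} (hd2 : d ≤ 2)
    (hreg : G.IsRegularOfDegree d) {B : Finset V} (hne : B.Nonempty)
    (hinv : (bdry G B).card ≤ d) :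
    ∃ F₀ : Finset V, F₀.card ≤ d + 1 ∧
      (stepB G B F₀).card < B.card ∧ (bdry G (stepB G B F₀)).card ≤ d := by
  classical
  -- choose b
  obtain ⟨b, hbB, hcase⟩ :
      ∃ b, b ∈ B ∧ (b ∈ bdry G B ∨ bdry G B = ∅) := by
    rcases (bdry G B).eq_empty_or_nonempty with h | ⟨b, hb⟩
    · obtain ⟨b, hb⟩ := hne
      exact ⟨b, hb, Or.inr h⟩
    · exact ⟨b, (mem_bdry.mp hb).1, Or.inl hb⟩
  set U : Finset V := G.neighborFinset b ∩ B with hU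
  set F₀ : Finset V := bdry G B ∪ insert b U with hF₀
  have hFb : b ∈ F₀ := by simp [hF₀]
  have hFbdry : bdry G B ⊆ F₀ := Finset.subset_union_left
  have hFU : U ⊆ F₀ := by
    intro u hu; exact Finset.mem_union_right _ (Finset.mem_insert_of_mem hu)
  set B' : Finset V := stepB G B F₀ with hB'
  have hsub : B' ⊆ B := by
    intro v hv
    rcases Finset.mem_union.mp hv with h | h
    · exact (Finset.mem_sdiff.mp h).1
    · obtain ⟨hvn, u, hu, hadj⟩ := mem_nbhd.mp h
      obtain ⟨huB, huF⟩ := Finset.mem_sdiff.mp hu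
      by_contra hvB
      exact huF (hFbdry (mem_bdry.mpr ⟨huB, v, hvB, hadj⟩))
  have hBF : B \ F₀ ⊆ B' := Finset.subset_union_left
  have hcomp : ∀ v, v ∈ B → v ∉ B' → v ∈ F₀ := by
    intro v hvB hvB'
    by_contra hvF
    exact hvB' (hBF (Finset.mem_sdiff.mpr ⟨hvB, hvF⟩))
  have hbB' : b ∉ B' := by
    intro hb
    rcases Finset.mem_union.mp hb with h | h
    · exact (Finset.mem_sdiff.mp h).2 hFb
    · obtain ⟨hvn, u, hu, hadj⟩ := mem_nbhd.mp h
      obtain ⟨huB, huF⟩ := Finset.mem_sdiff.mp hu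
      exact huF (hFU (Finset.mem_inter.mpr ⟨by
        rw [SimpleGraph.mem_neighborFinset]; exact hadj.symm, huB⟩))
  have hlt : B'.card < B.card :=
    Finset.card_lt_card ⟨hsub, fun h => hbB' (h hbB)⟩
  -- key smallness lemma: a vertex of F₀ other than b, not in B', has ≤ 1 neighbour in B'
  have hsmall : ∀ s, s ∈ F₀ → s ≠ b → s ∉ B' →
      ∀ x₁ x₂, x₁ ∈ B' → x₂ ∈ B' → G.Adj s x₁ → G.Adj s x₂ → x₁ = x₂ := by
    intro s hsF hsb hsB' x₁ x₂ hx₁ hx₂ ha₁ ha₂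
    -- find a neighbour w of s with w ∉ B'
    have hw : ∃ w, w ∉ B' ∧ G.Adj s w := by
      rcases Finset.mem_union.mp hsF with h | h
      · obtain ⟨-, w, hwB, hadj⟩ := mem_bdry.mp h
        exact ⟨w, fun hc => hwB (hsub hc), hadj⟩
      · rcases Finset.mem_insert.mp h with h | h
        · exact absurd h hsb
        · have hmem := (Finset.mem_inter.mp h).1
          rw [SimpleGraph.mem_neighborFinset] at hmem
          exact ⟨b, hbB', hmem.symm⟩
    obtain ⟨w, hwB', hadjw⟩ := hw
    by_contra hne12
    have hwx₁ : w ≠ x₁ := fun h => hwB' (h ▸ hx₁)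
    have hwx₂ : w ≠ x₂ := fun h => hwB' (h ▸ hx₂)
    have hsubN : ({w, x₁, x₂} : Finset V) ⊆ G.neighborFinset s := by
      intro z hz
      rw [SimpleGraph.mem_neighborFinset]
      rcases Finset.mem_insert.mp hz with h | h
      · exact h ▸ hadjw
      · rcases Finset.mem_insert.mp h with h | h
        · exact h ▸ ha₁
        · rw [Finset.mem_singleton.mp h]; exact ha₂
    have hcard3 : ({w, x₁, x₂} : Finset V).card = 3 := by
      rw [Finset.card_insert_of_notMem (by simp [hwx₁, hwx₂]),
        Finset.card_insert_of_notMem (by simp [hne12]), Finset.card_singleton]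
    have := Finset.card_le_card hsubN
    rw [hcard3] at this
    have hds : (G.neighborFinset s).card = d := hreg s
    omega
  -- the injection bounding bdry B'
  have hbdry' : (bdry G B').card ≤ (bdry G B \ {b}).card + U.card := by
    have hmap : (bdry G B').card ≤ ((bdry G B \ {b}) ∪ U).card := by
      set f : V → V := fun x =>
        if h : ∃ y, y ∉ B' ∧ G.Adj x y then
          (if h.choose ∈ B ∧ h.choose ≠ b then h.choose else x) else x with hf
      apply Finset.card_le_card_of_injOn f
      · intro x hx
        obtain ⟨hxB', w0, hw0, hadj0⟩ := mem_bdry.mp hx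
        have hex : ∃ y, y ∉ B' ∧ G.Adj x y := ⟨w0, hw0, hadj0⟩
        have hy1 : hex.choose ∉ B' := hex.choose_spec.1
        have hy2 : G.Adj x hex.choose := hex.choose_spec.2
        rw [hf]; dsimp only
        rw [dif_pos hex]
        by_cases hc : hex.choose ∈ B ∧ hex.choose ≠ b
        · rw [if_pos hc]
          have hyF : hex.choose ∈ F₀ := hcomp _ hc.1 hy1
          rcases Finset.mem_union.mp hyF with h | h
          · exact Finset.mem_union_left _
              (Finset.mem_sdiff.mpr ⟨h, by simp [hc.2]⟩)
          · rcases Finset.mem_insert.mp h with h | h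
            · exact absurd h hc.2
            · exact Finset.mem_union_right _ h
        · rw [if_neg hc]
          by_cases hyB : hex.choose ∈ B
          · -- then choose = b, so x ∈ N(b) ∩ B = U
            have hyb : hex.choose = b := by
              by_contra h; exact hc ⟨hyB, h⟩
            refine Finset.mem_union_right _ (Finset.mem_inter.mpr ⟨?_, hsub hxB'⟩)
            rw [SimpleGraph.mem_neighborFinset, ← hyb]
            exact hy2.symm
          · -- choose ∉ B, so x ∈ bdry B, x ≠ b
            have hxbd : x ∈ bdry G B :=
              mem_bdry.mpr ⟨hsub hxB', hex.choose, hyB, hy2⟩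
            have hxb : x ≠ b := fun h => hbB' (h ▸ hxB')
            exact Finset.mem_union_left _
              (Finset.mem_sdiff.mpr ⟨hxbd, by simp [hxb]⟩)
      · intro x₁ hx₁ x₂ hx₂ hfeq
        simp only [Finset.mem_coe] at hx₁ hx₂
        obtain ⟨hxB₁, w1, hw1, had1⟩ := mem_bdry.mp hx₁
        obtain ⟨hxB₂, w2, hw2, had2⟩ := mem_bdry.mp hx₂
        have hex₁ : ∃ y, y ∉ B' ∧ G.Adj x₁ y := ⟨w1, hw1, had1⟩
        have hex₂ : ∃ y, y ∉ B' ∧ G.Adj x₂ y := ⟨w2, hw2, had2⟩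
        rw [hf] at hfeq; dsimp only at hfeq
        rw [dif_pos hex₁, dif_pos hex₂] at hfeq
        by_cases hc₁ : hex₁.choose ∈ B ∧ hex₁.choose ≠ b <;>
          by_cases hc₂ : hex₂.choose ∈ B ∧ hex₂.choose ≠ b
        · rw [if_pos hc₁, if_pos hc₂] at hfeq
          -- both map to same witness s; use hsmall
          set s := hex₁.choose with hs
          have hsB' : s ∉ B' := hex₁.choose_spec.1
          have hsF : s ∈ F₀ := hcomp _ hc₁.1 hsB'
          exact hsmall s hsF hc₁.2 hsB' x₁ x₂ hxB₁ hxB₂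
            hex₁.choose_spec.2.symm (hfeq ▸ hex₂.choose_spec.2.symm)
        · rw [if_pos hc₁, if_neg hc₂] at hfeq
          exact absurd (hfeq ▸ hxB₂) hex₁.choose_spec.1
        · rw [if_neg hc₁, if_pos hc₂] at hfeq
          exact absurd (hfeq ▸ hxB₁) hex₂.choose_spec.1
        · rwa [if_neg hc₁, if_neg hc₂] at hfeq
    exact hmap.trans (Finset.card_union_le _ _)
  -- now the numeric case analysis
  have hUb : U.card ≤ d := by
    have hdeg : (G.neighborFinset b).card = d := hreg b
    have h2 : U.card ≤ (G.neighborFinset b).card :=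
      Finset.card_le_card Finset.inter_subset_left
    omega
  rcases hcase with hbbd | hbd0
  · -- b ∈ bdry B : sharper bounds
    have h1 : 1 ≤ d := by
      obtain ⟨-, w, hwB, hadj⟩ := mem_bdry.mp hbbd
      have : w ∈ G.neighborFinset b := by
        rw [SimpleGraph.mem_neighborFinset]; exact hadj
      have hdeg : (G.neighborFinset b).card = d := hreg b
      have := Finset.card_pos.mpr ⟨w, this⟩
      omega
    obtain ⟨-, w, hwB, hadj⟩ := mem_bdry.mp hbbd
    have hUd1 : U.card ≤ d - 1 := by
      have hsubU : U ⊆ (G.neighborFinset b).erase w := by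
        intro u hu
        obtain ⟨hu1, hu2⟩ := Finset.mem_inter.mp hu
        exact Finset.mem_erase.mpr ⟨fun h => hwB (h ▸ hu2), hu1⟩
      have hdeg : (G.neighborFinset b).card = d := hreg b
      have := Finset.card_le_card hsubU
      rw [Finset.card_erase_of_mem (by
        rw [SimpleGraph.mem_neighborFinset]; exact hadj)] at this
      omega
    have hbd1 : (bdry G B \ {b}).card ≤ d - 1 := by
      have : bdry G B \ {b} = (bdry G B).erase b := by
        ext z; simp [Finset.mem_erase, and_comm]
      rw [this, Finset.card_erase_of_mem hbbd]
      omega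
    have hFcard : F₀.card ≤ d + 1 := by
      have hsubF : F₀ ⊆ bdry G B ∪ U := by
        intro z hz
        rcases Finset.mem_union.mp hz with h | h
        · exact Finset.mem_union_left _ h
        · rcases Finset.mem_insert.mp h with h | h
          · exact Finset.mem_union_left _ (h ▸ hbbd)
          · exact Finset.mem_union_right _ h
      have := (Finset.card_le_card hsubF).trans (Finset.card_union_le _ _)
      omega
    have hgoal : (bdry G B').card ≤ d := by omega
    exact ⟨F₀, hFcard, hlt, hgoal⟩
  · -- bdry B = ∅
    have hbd1 : (bdry G B \ {b}).card = 0 := by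
      rw [hbd0]; simp
    have hFcard : F₀.card ≤ d + 1 := by
      have : F₀ = insert b U := by rw [hF₀, hbd0]; simp
      rw [this]
      have := Finset.card_insert_le b U
      omega
    have hgoal : (bdry G B').card ≤ d := by omega
    exact ⟨F₀, hFcard, hlt, hgoal⟩


lemma wins_of_inv {G : SimpleGraph V} {d : ℕ} (hd2 : d ≤ 2)
    (hreg : G.IsRegularOfDegree d) :
    ∀ n (B : Finset V), B.card ≤ n → (bdry G B).card ≤ d → Wins G (d + 1) B := by
  intro n
  induction n with
  | zero =>
      intro B hB _
      have : B = ∅ := Finset.card_eq_zero.mp (Nat.le_zero.mp hB)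
      rw [this]; exact wins_empty
  | succ n ih =>
      intro B hB hinv
      rcases B.eq_empty_or_nonempty with h | hne
      · rw [h]; exact wins_empty
      · obtain ⟨F₀, hc, hlt, hinv'⟩ := step_lemma hd2 hreg hne hinv
        exact wins_step hc (ih _ (by omega) hinv')

lemma bdry_univ (G : SimpleGraph V) : bdry G (Finset.univ : Finset V) = ∅ := by
  ext x; simp [bdry]

lemma burn_all {G : SimpleGraph V} {d : ℕ} (hd : 0 < d)
    (hreg : G.IsRegularOfDegree d) (F : ℕ → Finset V)
    (hF : ∀ i, (F i).card ≤ d) : ∀ t, burn G F t = Finset.univ := by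
  intro t
  induction t with
  | zero => rfl
  | succ t ih =>
      rw [burn, ih]
      apply Finset.eq_univ_of_forall
      intro v
      by_cases hv : v ∈ F (t + 1)
      · refine Finset.mem_union_right _ (mem_nbhd.mpr ⟨by simp [hv], ?_⟩)
        have hex : ∃ u, u ∉ F (t + 1) ∧ G.Adj u v := by
          by_contra hcon
          push_neg at hcon
          have hsubN : G.neighborFinset v ⊆ (F (t + 1)).erase v := by
            intro u hu
            rw [SimpleGraph.mem_neighborFinset] at hu
            refine Finset.mem_erase.mpr ⟨fun h => G.loopless.irrefl v (h ▸ hu), ?_⟩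
            by_contra huF
            exact hcon u huF hu.symm
          have hdeg : (G.neighborFinset v).card = d := hreg v
          have h1 := Finset.card_le_card hsubN
          have h2 := Finset.card_erase_of_mem hv
          have h3 := hF (t + 1)
          omega
        obtain ⟨u, hu1, hu2⟩ := hex
        exact ⟨u, Finset.mem_sdiff.mpr ⟨Finset.mem_univ u, hu1⟩, hu2⟩
      · exact Finset.mem_union_left _ (Finset.mem_sdiff.mpr ⟨Finset.mem_univ v, hv⟩)

lemma empty_wins_trivial (G : SimpleGraph V) :
    ∃ T F, WinningStrategy G (Fintype.card V) T F := by
  refine ⟨1, fun _ => Finset.univ, fun i => by simp, ?_⟩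
  rw [burn]
  have h1 : burn G (fun _ => Finset.univ) 0 = Finset.univ := rfl
  rw [h1, Finset.sdiff_self]
  ext v; simp [nbhd]

end FFNAux

open FFNAux in
theorem ffn_regular [Fintype V] [Nonempty V] (G : SimpleGraph V) (d : ℕ) (hd : 0 < d)
    (hreg : G.IsRegularOfDegree d) :
    d + 1 ≤ ffn G ∧ (d = 1 ∨ d = 2 → ffn G = d + 1) := by
  have hSne : {m | ∃ T F, WinningStrategy G m T F}.Nonempty :=
    ⟨Fintype.card V, empty_wins_trivial G⟩
  have hlow : d + 1 ≤ ffn G := by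
    have hmem := Nat.sInf_mem hSne
    obtain ⟨T, F, hcard, hburn⟩ := hmem
    by_contra hcon
    push_neg at hcon
    have hle : ∀ i, (F i).card ≤ d := fun i => by
      have := hcard i
      unfold ffn at hcon
      omega
    have := burn_all hd hreg F hle T
    rw [hburn] at this
    exact (Finset.univ_nonempty (α := V)).ne_empty this.symm
  refine ⟨hlow, fun hd12 => ?_⟩
  have hd2 : d ≤ 2 := by rcases hd12 with h | h <;> omega
  have hwin : Wins G (d + 1) (Finset.univ : Finset V) :=
    wins_of_inv hd2 hreg (Finset.univ.card) Finset.univ le_rfl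
      (by rw [bdry_univ]; simp)
  obtain ⟨T, F, hcard, hburn⟩ := hwin
  have hmem : (d + 1) ∈ {m | ∃ T F, WinningStrategy G m T F} :=
    ⟨T, F, hcard, by rw [burn_eq_burnFrom]; exact hburn⟩
  exact le_antisymm (Nat.sInf_le hmem) hlow
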